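/- With h, F, A as given, for every r ∈ (0,1): (d-1)·∫_r^1 A(s)^{d-2} b(s) ds = h(r)^{1-1/d} e^{-F(r)}. -/

import Mathlib

open MeasureTheory Set intervalIntegral Filter Topology

lemma ftc_lipschitz_ae (f g : ℝ → ℝ) (a b b' : ℝ) (hab : a ≤ b) (hbb' : b < b')
    (C : NNReal) (hf : LipschitzOnWith C f (Set.Icc a b'))
    (hg : ∀ᵐ x ∂(volume.restrict (Set.Ioo a b)), HasDerivAt f (g x) x) :
    IntegrableOn g (Set.Ioo a b) volume ∧ ∫ x in a..b, g x = f b - f a := by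
  set e : ℕ → ℝ := fun n => (b' - b) / (n + 2) with he_def
  have hbb'' : 0 < b' - b := by linarith
  have he_pos : ∀ n, 0 < e n := fun n => div_pos hbb'' (by positivity)
  have he_le : ∀ n : ℕ, e n ≤ b' - b := by
    intro n
    rw [he_def]
    rw [div_le_iff₀ (by positivity : (0:ℝ) < (n:ℝ) + 2)]
    nlinarith [Nat.cast_nonneg (α := ℝ) n]
  have he_tendsto : Tendsto e atTop (𝓝 0) := by
    apply Tendsto.div_atTop (tendsto_const_nhds)
    exact tendsto_atTop_add_const_right _ _ tendsto_natCast_atTop_atTop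
  set q : ℕ → ℝ → ℝ := fun n x => (f (x + e n) - f x) / e n with hq_def
  have hmem : ∀ n, ∀ x ∈ Icc a b, x + e n ∈ Icc a b' := by
    intro n x hx
    constructor
    · linarith [hx.1, (he_pos n).le]
    · have := he_le n; have := hx.2; linarith
  have hfc : ContinuousOn f (Icc a b') := hf.continuousOn
  have hmeas_q : ∀ n, AEStronglyMeasurable (q n) (volume.restrict (Set.Ioo a b)) := by
    intro n
    have hcq : ContinuousOn (q n) (Icc a b) := by
      apply ContinuousOn.div_const
      apply ContinuousOn.sub
      · exact hfc.comp (by fun_prop) (fun x hx => hmem n x hx)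
      · exact hfc.mono (Icc_subset_Icc le_rfl hbb'.le)
    exact ((hcq.mono Ioo_subset_Icc_self).aestronglyMeasurable measurableSet_Ioo)
  have h_bound : ∀ n, ∀ᵐ x ∂(volume.restrict (Set.Ioo a b)), ‖q n x‖ ≤ (C : ℝ) := by
    intro n
    filter_upwards [ae_restrict_mem measurableSet_Ioo] with x hx
    have hx' : x ∈ Icc a b := Ioo_subset_Icc_self hx
    have h1 : dist (f (x + e n)) (f x) ≤ (C : ℝ) * dist (x + e n) x :=
      hf.dist_le_mul _ (hmem n x hx') _ (Icc_subset_Icc le_rfl hbb'.le hx')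
    rw [Real.dist_eq, Real.dist_eq] at h1
    have h2 : |x + e n - x| = e n := by rw [add_sub_cancel_left, abs_of_pos (he_pos n)]
    rw [h2] at h1
    have : ‖q n x‖ = |f (x + e n) - f x| / e n := by
      rw [hq_def]; simp [abs_div, abs_of_pos (he_pos n)]
    rw [this, div_le_iff₀ (he_pos n)]
    linarith
  have h_lim : ∀ᵐ x ∂(volume.restrict (Set.Ioo a b)),
      Tendsto (fun n => q n x) atTop (𝓝 (g x)) := by
    filter_upwards [hg] with x hx
    rw [hasDerivAt_iff_tendsto_slope] at hx
    have hseq : Tendsto (fun n => x + e n) atTop (𝓝[≠] x) := by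
      apply tendsto_nhdsWithin_of_tendsto_nhds_of_eventually_within
      · have : Tendsto (fun n => x + e n) atTop (𝓝 (x + 0)) :=
          tendsto_const_nhds.add he_tendsto
        simpa using this
      · exact Eventually.of_forall fun n => by
          simp only [mem_compl_iff, mem_singleton_iff]
          have := he_pos n; intro hcon; nlinarith [congrArg (fun y => y - x) hcon]
    have := hx.comp hseq
    convert this using 2 with n
    rw [hq_def]
    simp only [Function.comp_apply, slope_def_field, add_sub_cancel_left]
  have h_int_bound : Integrable (fun _ : ℝ => (C : ℝ)) (volume.restrict (Set.Ioo a b)) := by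
    apply integrable_const
  have hDCT := tendsto_integral_of_dominated_convergence (fun _ => (C : ℝ))
    hmeas_q h_int_bound h_bound h_lim
  -- integrability of g
  have hgmeas : AEStronglyMeasurable g (volume.restrict (Set.Ioo a b)) :=
    aestronglyMeasurable_of_tendsto_ae atTop hmeas_q h_lim
  have hgbound : ∀ᵐ x ∂(volume.restrict (Set.Ioo a b)), ‖g x‖ ≤ (C : ℝ) := by
    filter_upwards [h_lim, ae_all_iff.2 h_bound] with x hx hb2
    exact le_of_tendsto' (hx.norm) hb2
  have hgint : IntegrableOn g (Set.Ioo a b) volume :=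
    Integrable.mono' h_int_bound hgmeas hgbound
  refine ⟨hgint, ?_⟩
  have hii : ∀ u v : ℝ, a ≤ u → u ≤ v → v ≤ b' → IntervalIntegrable f volume u v := by
    intro u v h1 h2 h3
    apply ContinuousOn.intervalIntegrable
    apply hfc.mono
    rw [uIcc_of_le h2]
    exact Icc_subset_Icc h1 h3
  have hIqn : ∀ n, ∫ x in Set.Ioo a b, q n x
      = (∫ x in b..(b + e n), f x) / e n - (∫ x in a..(a + e n), f x) / e n := by
    intro n
    have hIoo : ∫ x in Set.Ioo a b, q n x = ∫ x in a..b, q n x := by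
      rw [intervalIntegral.integral_of_le hab, MeasureTheory.integral_Ioc_eq_integral_Ioo]
    have hiif : IntervalIntegrable (fun x => f (x + e n)) volume a b := by
      apply ContinuousOn.intervalIntegrable
      rw [uIcc_of_le hab]
      exact hfc.comp (by fun_prop) (fun x hx => hmem n x hx)
    have hiib : IntervalIntegrable f volume a b := hii a b le_rfl hab (by linarith)
    have heq1 : ∫ x in a..b, q n x
        = ((∫ x in a..b, f (x + e n)) - ∫ x in a..b, f x) / e n := by
      rw [hq_def]
      rw [intervalIntegral.integral_div]
      rw [intervalIntegral.integral_sub hiif hiib]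
    have heq2 : (∫ x in a..b, f (x + e n)) = ∫ x in (a + e n)..(b + e n), f x :=
      intervalIntegral.integral_comp_add_right f (e n)
    have hadj1 : (∫ x in a..(a + e n), f x) + (∫ x in (a + e n)..(b + e n), f x)
        = ∫ x in a..(b + e n), f x := by
      apply intervalIntegral.integral_add_adjacent_intervals
      · exact hii a (a + e n) le_rfl (by linarith [he_pos n]) (by linarith [he_le n])
      · exact hii (a + e n) (b + e n) (by linarith [he_pos n]) (by linarith)
          (by linarith [he_le n])
    have hadj2 : (∫ x in a..b, f x) + (∫ x in b..(b + e n), f x)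
        = ∫ x in a..(b + e n), f x := by
      apply intervalIntegral.integral_add_adjacent_intervals hiib
      exact hii b (b + e n) hab (by linarith [he_pos n]) (by linarith [he_le n])
    rw [hIoo, heq1, heq2]
    rw [show (∫ x in (a + e n)..(b + e n), f x) - ∫ x in a..b, f x
      = (∫ x in b..(b + e n), f x) - (∫ x in a..(a + e n), f x) by linarith]
    rw [sub_div]
  have hclaim : ∀ c, a ≤ c → c ≤ b →
      Tendsto (fun n => (∫ x in c..(c + e n), f x) / e n) atTop (𝓝 (f c)) := by
    intro c hac hcb
    have key : ∀ n, |(∫ x in c..(c + e n), f x) / e n - f c| ≤ (C : ℝ) * e n := by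
      intro n
      have hiic : IntervalIntegrable f volume c (c + e n) :=
        hii c (c + e n) hac (by linarith [he_pos n]) (by linarith [he_le n])
      have h0 : (∫ x in c..(c + e n), f x) / e n - f c
          = (∫ x in c..(c + e n), (f x - f c)) / e n := by
        rw [intervalIntegral.integral_sub hiic intervalIntegrable_const,
          intervalIntegral.integral_const]
        rw [add_sub_cancel_left, smul_eq_mul, sub_div]
        congr 1
        field_simp
        rw [mul_div_assoc, div_self (he_pos n).ne', mul_one]
      have hbnd : ∀ x ∈ Set.uIoc c (c + e n), ‖f x - f c‖ ≤ (C : ℝ) * e n := by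
        intro x hx
        rw [Set.uIoc_of_le (by linarith [he_pos n])] at hx
        have hxI : x ∈ Icc a b' := ⟨by linarith [hx.1.le], by linarith [hx.2, he_le n]⟩
        have hcI : c ∈ Icc a b' := ⟨hac, by linarith⟩
        have := hf.dist_le_mul x hxI c hcI
        rw [Real.dist_eq, Real.dist_eq] at this
        refine this.trans ?_
        have : |x - c| ≤ e n := by
          rw [abs_of_nonneg (by linarith [hx.1.le])]; linarith [hx.2]
        nlinarith [(C : ℝ).toNNReal.2, NNReal.coe_nonneg C]
      have hnorm := intervalIntegral.norm_integral_le_of_norm_le_const hbnd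
      rw [show c + e n - c = e n by ring, abs_of_pos (he_pos n)] at hnorm
      rw [h0, abs_div, abs_of_pos (he_pos n), div_le_iff₀ (he_pos n)]
      calc |∫ x in c..(c + e n), (f x - f c)| ≤ (C : ℝ) * e n * e n := hnorm
        _ = (C : ℝ) * e n * e n := rfl
    have h2 : Tendsto (fun n => (C : ℝ) * e n) atTop (𝓝 0) := by
      simpa using he_tendsto.const_mul (C : ℝ)
    have h3 : Tendsto (fun n => (∫ x in c..(c + e n), f x) / e n - f c) atTop (𝓝 0) := by
      apply squeeze_zero_norm _ h2
      intro n; exact key n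
    have := h3.add (tendsto_const_nhds (x := f c))
    simpa using this
  have hlimit : Tendsto (fun n => ∫ x in Set.Ioo a b, q n x) atTop (𝓝 (f b - f a)) := by
    have := (hclaim b hab le_rfl).sub (hclaim a le_rfl hab)
    apply this.congr
    intro n; rw [hIqn n]
  have hfinal : ∫ x in Set.Ioo a b, g x = f b - f a := tendsto_nhds_unique hDCT hlimit
  rw [intervalIntegral.integral_of_le hab, MeasureTheory.integral_Ioc_eq_integral_Ioo]
  exact hfinal

/-- (d-1)·∫_r^1 A(s)^{d-2} b(s) ds = h(r)^{1-1/d} e^{-F(r)} for r ∈ (0,1). -/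
theorem integral_A_pow_d_sub_two
    (d : ℕ) (hd : 2 ≤ d) (δ δ' : ℝ → ℝ)
    (hmono : MonotoneOn δ (Set.Icc 0 1))
    (hlip : ∀ s ∈ Set.Icc (0:ℝ) 1, ∀ t ∈ Set.Icc (0:ℝ) 1,
      |δ s - δ t| ≤ (d : ℝ) * |s - t|)
    (h0 : δ 0 = 0) (h1 : δ 1 = 1)
    (hlt : ∀ t ∈ Set.Ioo (0:ℝ) 1, δ t < t)
    (hderiv : ∀ᵐ t ∂(volume.restrict (Set.Icc (0:ℝ) 1)), HasDerivAt δ (δ' t) t)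
    (hd' : ∀ t ∈ Set.Icc (0:ℝ) 1, δ' t ∈ Set.Icc (0:ℝ) (d:ℝ))
    (h F A b : ℝ → ℝ)
    (hh : ∀ r, h r = r - δ r)
    (hF : ∀ r, F r = (((d:ℝ) - 1) / d) * ∫ s in (1/2 : ℝ)..r, 1 / h s)
    (hA : ∀ r, A r = h r ^ (1/(d:ℝ)) * Real.exp (F r))
    (hA0 : A 0 = 0)
    (hb : ∀ r, b r = (δ' r / d) * h r ^ (-1 + 1/(d:ℝ)) *
      Real.exp (-((d:ℝ) - 1) * F r)) :
    ∀ r ∈ Set.Ioo (0:ℝ) 1,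
      ((d : ℝ) - 1) * ∫ s in r..(1:ℝ), A s ^ (d - 2) * b s
        = h r ^ (1 - 1/(d:ℝ)) * Real.exp (-F r) := by
  intro r hr
  have hd2 : (2:ℝ) ≤ (d:ℝ) := by exact_mod_cast hd
  have hdpos : (0:ℝ) < d := by linarith
  have hd1 : (1:ℝ) ≤ (d:ℝ) - 1 := by linarith
  have hα_pos : (0:ℝ) < 1 - 1/(d:ℝ) := by
    have : 1/(d:ℝ) ≤ 1/2 := by
      apply div_le_div_of_nonneg_left <;> linarith
    linarith
  have hα_eq : 1 - 1/(d:ℝ) = ((d:ℝ) - 1)/d := by field_simp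
  -- continuity of δ on [0,1]
  have hδcont : ContinuousOn δ (Set.Icc 0 1) := by
    have : LipschitzOnWith (Real.toNNReal (d:ℝ)) δ (Set.Icc 0 1) := by
      apply LipschitzOnWith.of_dist_le'
      intro x hx y hy
      rw [Real.dist_eq, Real.dist_eq]
      exact hlip x hx y hy
    exact this.continuousOn
  have hhcont : ContinuousOn h (Set.Icc 0 1) := by
    have : h = fun r => r - δ r := funext hh
    rw [this]
    exact continuousOn_id.sub hδcont
  have hδ0 : ∀ s ∈ Set.Icc (0:ℝ) 1, 0 ≤ δ s := by
    intro s hs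
    have := hmono (left_mem_Icc.2 zero_le_one) hs hs.1
    rwa [h0] at this
  have hδle : ∀ s ∈ Set.Icc (0:ℝ) 1, δ s ≤ s := by
    intro s hs
    rcases eq_or_lt_of_le hs.1 with h' | h'
    · rw [← h', h0]
    rcases eq_or_lt_of_le hs.2 with h' | h'
    · rw [h', h1]
    · exact (hlt s ⟨by assumption, h'⟩).le
  have hpos : ∀ s ∈ Set.Ioo (0:ℝ) 1, 0 < h s := by
    intro s hs
    rw [hh]; linarith [hlt s hs]
  have hnonneg : ∀ s ∈ Set.Icc (0:ℝ) 1, 0 ≤ h s := by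
    intro s hs
    rw [hh]; linarith [hδle s hs]
  have hle1 : ∀ s ∈ Set.Icc (0:ℝ) 1, h s ≤ 1 := by
    intro s hs
    rw [hh]; linarith [hδ0 s hs, hs.2]
  have hh1 : h 1 = 0 := by rw [hh, h1]; ring
  have hhlip : ∀ x ∈ Set.Icc (0:ℝ) 1, ∀ y ∈ Set.Icc (0:ℝ) 1,
      |h x - h y| ≤ ((d:ℝ) + 1) * |x - y| := by
    intro x hx y hy
    rw [hh, hh]
    have h1' := hlip x hx y hy
    calc |x - δ x - (y - δ y)| = |(x - y) + (δ y - δ x)| := by ring_nf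
      _ ≤ |x - y| + |δ y - δ x| := abs_add_le _ _
      _ ≤ |x - y| + (d:ℝ) * |y - x| := by linarith [hlip y hy x hx]
      _ = ((d:ℝ) + 1) * |x - y| := by rw [abs_sub_comm y x]; ring
  -- F differentiable on (0,1)
  have hF' : ∀ s ∈ Set.Ioo (0:ℝ) 1, HasDerivAt F ((((d:ℝ) - 1)/d) * (1/h s)) s := by
    intro s hs
    have hIoosub : ∀ u ∈ Set.uIcc (1/2 : ℝ) s, u ∈ Set.Ioo (0:ℝ) 1 := by
      intro u hu
      rw [Set.uIcc] at hu
      constructor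
      · have : (0:ℝ) < min (1/2) s := lt_min (by norm_num) hs.1
        linarith [hu.1]
      · have : max (1/2:ℝ) s < 1 := max_lt (by norm_num) hs.2
        linarith [hu.2]
    have hinvcont : ContinuousOn (fun x => 1 / h x) (Set.Ioo 0 1) := by
      apply ContinuousOn.div continuousOn_const
        (hhcont.mono Set.Ioo_subset_Icc_self)
      intro x hx; exact (hpos x hx).ne'
    have hii : IntervalIntegrable (fun x => 1 / h x) volume (1/2) s := by
      apply ContinuousOn.intervalIntegrable
      exact hinvcont.mono hIoosub
    have hP : HasDerivAt (fun u => ∫ x in (1/2 : ℝ)..u, 1 / h x) (1 / h s) s := by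
      apply intervalIntegral.integral_hasDerivAt_right hii
      · exact hinvcont.stronglyMeasurableAtFilter isOpen_Ioo s hs
      · exact (hinvcont.continuousAt (isOpen_Ioo.mem_nhds hs))
    have : F = fun u => (((d:ℝ) - 1)/d) * ∫ x in (1/2 : ℝ)..u, 1 / h x := funext hF
    rw [this]
    exact hP.const_mul _
  have hFcont : ContinuousOn F (Set.Ioo 0 1) :=
    fun s hs => ((hF' s hs).continuousAt).continuousWithinAt
  have hFnonneg : ∀ s, 1/2 ≤ s → s ≤ 1 → 0 ≤ F s := by
    intro s hs1 hs2
    rw [hF]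
    apply mul_nonneg (by positivity)
    apply intervalIntegral.integral_nonneg hs1
    intro u hu
    have hu0 : 0 ≤ h u := hnonneg u ⟨by linarith [hu.1], by linarith [hu.2]⟩
    positivity
  have hdne : (d:ℝ) ≠ 0 := ne_of_gt hdpos
  have hcast : ((d - 2 : ℕ) : ℝ) = (d:ℝ) - 2 := by
    push_cast [Nat.cast_sub hd]; ring
  -- closed form of the integrand
  have hAb : ∀ s ∈ Set.Ioo (0:ℝ) 1, A s ^ (d - 2) * b s
      = (δ' s / d) * h s ^ (-(1/(d:ℝ))) * Real.exp (-F s) := by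
    intro s hs
    have hx : 0 < h s := hpos s hs
    rw [hA, hb, mul_pow]
    rw [← Real.rpow_natCast (h s ^ (1/(d:ℝ))) (d - 2), ← Real.rpow_mul hx.le]
    rw [← Real.exp_nat_mul]
    rw [show h s ^ (1 / (d:ℝ) * ((d-2:ℕ):ℝ)) * Real.exp (((d-2:ℕ):ℝ) * F s) *
        (δ' s / (d:ℝ) * h s ^ (-1 + 1/(d:ℝ)) * Real.exp (-((d:ℝ) - 1) * F s))
      = (δ' s / d) * (h s ^ (1 / (d:ℝ) * ((d-2:ℕ):ℝ)) * h s ^ (-1 + 1/(d:ℝ))) *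
        (Real.exp (((d-2:ℕ):ℝ) * F s) * Real.exp (-((d:ℝ) - 1) * F s)) by ring]
    rw [← Real.rpow_add hx, ← Real.exp_add]
    congr 2
    · rw [hcast]; field_simp; ring
    · rw [hcast]; ring
  -- derivative of G
  set G : ℝ → ℝ := fun s => h s ^ (1 - 1/(d:ℝ)) * Real.exp (-F s) with hG_def
  have hG' : ∀ s ∈ Set.Ioo (0:ℝ) 1, HasDerivAt δ (δ' s) s →
      HasDerivAt G (-(((d:ℝ) - 1) * (A s ^ (d - 2) * b s))) s := by
    intro s hs hδs
    have hx : 0 < h s := hpos s hs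
    have hh' : HasDerivAt h (1 - δ' s) s := by
      have : h = fun x => x - δ x := funext hh
      rw [this]
      exact (hasDerivAt_id' s).sub hδs
    have H1 : HasDerivAt (fun x => h x ^ (1 - 1/(d:ℝ)))
        ((1 - 1/(d:ℝ)) * h s ^ (1 - 1/(d:ℝ) - 1) * (1 - δ' s)) s := by
      have := hh'.rpow_const (p := 1 - 1/(d:ℝ)) (Or.inl hx.ne')
      convert this using 1; ring
    have H2 : HasDerivAt (fun x => Real.exp (-F x))
        (-((((d:ℝ) - 1)/d) * (1/h s)) * Real.exp (-F s)) s := by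
      have := ((hF' s hs).neg).exp
      exact this.congr_deriv (mul_comm _ _)
    have := H1.mul H2
    refine this.congr_deriv ?_
    rw [hAb s hs]
    have e1 : h s ^ (1 - 1/(d:ℝ) - 1) = h s ^ (1 - 1/(d:ℝ)) / h s := by
      rw [Real.rpow_sub hx, Real.rpow_one]
    have e2 : h s ^ (-(1/(d:ℝ))) = h s ^ (1 - 1/(d:ℝ)) / h s := by
      rw [← e1]; congr 1; ring
    rw [e2, e1]
    field_simp
    ring
  -- G is Lipschitz on [r, t'] for t' < 1
  have hGlip : ∀ t' : ℝ, r ≤ t' → t' < 1 → ∃ C : NNReal, LipschitzOnWith C G (Set.Icc r t') := by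
    intro t' hrt' ht'1
    set K := Set.Icc r t' with hK_def
    have hKsub : K ⊆ Set.Ioo (0:ℝ) 1 := fun x hx => ⟨lt_of_lt_of_le hr.1 hx.1, lt_of_le_of_lt hx.2 ht'1⟩
    have hKsub' : K ⊆ Set.Icc (0:ℝ) 1 := hKsub.trans Set.Ioo_subset_Icc_self
    have hKne : K.Nonempty := ⟨r, le_refl r, hrt'⟩
    have hKcomp : IsCompact K := isCompact_Icc
    obtain ⟨x₀, hx₀K, hx₀min⟩ := hKcomp.exists_isMinOn hKne (hhcont.mono hKsub')
    set m := h x₀ with hm_def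
    have hm_pos : 0 < m := hpos x₀ (hKsub hx₀K)
    have hm_le : ∀ y ∈ K, m ≤ h y := fun y hy => hx₀min hy
    obtain ⟨x₁, hx₁K, hx₁min⟩ := hKcomp.exists_isMinOn hKne (hFcont.mono hKsub)
    set Bv := Real.exp (-F x₁) with hBv_def
    have hBv_pos : 0 < Bv := Real.exp_pos _
    have hBv_le : ∀ y ∈ K, Real.exp (-F y) ≤ Bv := by
      intro y hy
      apply Real.exp_le_exp.2
      simp only [neg_le_neg_iff]
      exact hx₁min hy
    -- Lipschitz estimate for v = exp(-F)
    set Cv := (((d:ℝ) - 1)/d) * (1/m) * Bv with hCv_def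
    have hCv_nonneg : 0 ≤ Cv := by positivity
    have hv_lip : ∀ x ∈ K, ∀ y ∈ K,
        |Real.exp (-F y) - Real.exp (-F x)| ≤ Cv * |y - x| := by
      intro x hx y hy
      have hder : ∀ z ∈ K, HasDerivWithinAt (fun x => Real.exp (-F x))
          (-((((d:ℝ) - 1)/d) * (1/h z)) * Real.exp (-F z)) K z := by
        intro z hz
        have := ((hF' z (hKsub hz)).neg).exp
        have h2 : HasDerivAt (fun x => Real.exp (-F x))
            (-((((d:ℝ) - 1)/d) * (1/h z)) * Real.exp (-F z)) z := by
          exact this.congr_deriv (mul_comm _ _)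
        exact h2.hasDerivWithinAt
      have hbound : ∀ z ∈ K, ‖-((((d:ℝ) - 1)/d) * (1/h z)) * Real.exp (-F z)‖ ≤ Cv := by
        intro z hz
        have hhz : 0 < h z := hpos z (hKsub hz)
        have h1m : 1/h z ≤ 1/m := by
          apply one_div_le_one_div_of_le hm_pos (hm_le z hz)
        rw [Real.norm_eq_abs, abs_mul, abs_neg, abs_mul]
        rw [abs_of_nonneg (by positivity : (0:ℝ) ≤ ((d:ℝ)-1)/d),
          abs_of_nonneg (by positivity : (0:ℝ) ≤ 1/h z),
          abs_of_nonneg (Real.exp_pos _).le, hCv_def]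
        have hc : (0:ℝ) ≤ ((d:ℝ)-1)/d := by positivity
        exact mul_le_mul (mul_le_mul le_rfl h1m (by positivity) hc) (hBv_le z hz)
          (Real.exp_pos _).le (by positivity)
      have h3 := Convex.norm_image_sub_le_of_norm_hasDerivWithin_le hder hbound
        (convex_Icc _ _) hx hy
      rwa [Real.norm_eq_abs, Real.norm_eq_abs] at h3
    -- Lipschitz estimate for φ = ·^(1-1/d) on [m,1]
    set Cφ := (1 - 1/(d:ℝ)) * m ^ (1 - 1/(d:ℝ) - 1) with hCφ_def
    have hCφ_nonneg : 0 ≤ Cφ := by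
      apply mul_nonneg hα_pos.le (Real.rpow_nonneg hm_pos.le _)
    have hφ_lip : ∀ x ∈ Set.Icc m 1, ∀ y ∈ Set.Icc m 1,
        |x ^ (1 - 1/(d:ℝ)) - y ^ (1 - 1/(d:ℝ))| ≤ Cφ * |x - y| := by
      intro x hx y hy
      have hder : ∀ z ∈ Set.Icc m 1, HasDerivWithinAt (fun z : ℝ => z ^ (1 - 1/(d:ℝ)))
          ((1 - 1/(d:ℝ)) * z ^ (1 - 1/(d:ℝ) - 1)) (Set.Icc m 1) z := by
        intro z hz
        have hz0 : 0 < z := lt_of_lt_of_le hm_pos hz.1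
        exact (Real.hasDerivAt_rpow_const (Or.inl hz0.ne')).hasDerivWithinAt
      have hbound : ∀ z ∈ Set.Icc m 1, ‖(1 - 1/(d:ℝ)) * z ^ (1 - 1/(d:ℝ) - 1)‖ ≤ Cφ := by
        intro z hz
        have hz0 : 0 < z := lt_of_lt_of_le hm_pos hz.1
        rw [Real.norm_eq_abs, abs_mul, abs_of_nonneg hα_pos.le,
          abs_of_nonneg (Real.rpow_nonneg hz0.le _), hCφ_def]
        apply mul_le_mul_of_nonneg_left _ hα_pos.le
        apply Real.rpow_le_rpow_of_nonpos hm_pos hz.1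
        have : (0:ℝ) < 1/(d:ℝ) := by positivity
        linarith
      have h3 := Convex.norm_image_sub_le_of_norm_hasDerivWithin_le hder hbound
        (convex_Icc _ _) hy hx
      rwa [Real.norm_eq_abs, Real.norm_eq_abs] at h3
    -- combine
    have hmaps : ∀ y ∈ K, h y ∈ Set.Icc m 1 := fun y hy =>
      ⟨hm_le y hy, hle1 y (hKsub' hy)⟩
    have hu_le1 : ∀ y ∈ K, h y ^ (1 - 1/(d:ℝ)) ≤ 1 := by
      intro y hy
      apply Real.rpow_le_one (hnonneg y (hKsub' hy)) (hle1 y (hKsub' hy)) hα_pos.le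
    refine ⟨Real.toNNReal (Cφ * ((d:ℝ) + 1) * Bv + Cv), LipschitzOnWith.of_dist_le' ?_⟩
    intro x hx y hy
    rw [Real.dist_eq, Real.dist_eq, hG_def]
    have key : h x ^ (1 - 1/(d:ℝ)) * Real.exp (-F x) - h y ^ (1 - 1/(d:ℝ)) * Real.exp (-F y)
        = (h x ^ (1 - 1/(d:ℝ)) - h y ^ (1 - 1/(d:ℝ))) * Real.exp (-F x)
          + h y ^ (1 - 1/(d:ℝ)) * (Real.exp (-F x) - Real.exp (-F y)) := by ring
    simp only []
    rw [key]
    calc |(h x ^ (1 - 1/(d:ℝ)) - h y ^ (1 - 1/(d:ℝ))) * Real.exp (-F x)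
          + h y ^ (1 - 1/(d:ℝ)) * (Real.exp (-F x) - Real.exp (-F y))|
        ≤ |(h x ^ (1 - 1/(d:ℝ)) - h y ^ (1 - 1/(d:ℝ)))| * |Real.exp (-F x)|
          + |h y ^ (1 - 1/(d:ℝ))| * |Real.exp (-F x) - Real.exp (-F y)| := by
          refine (abs_add_le _ _).trans ?_
          rw [abs_mul, abs_mul]
      _ ≤ (Cφ * (((d:ℝ) + 1) * |x - y|)) * Bv + 1 * (Cv * |x - y|) := by
          apply add_le_add
          · apply mul_le_mul _ _ (abs_nonneg _) (by positivity)
            · refine (hφ_lip (h x) (hmaps x hx) (h y) (hmaps y hy)).trans ?_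
              exact mul_le_mul_of_nonneg_left (hhlip x (hKsub' hx) y (hKsub' hy)) hCφ_nonneg
            · rw [abs_of_nonneg (Real.exp_pos _).le]; exact hBv_le x hx
          · apply mul_le_mul _ _ (abs_nonneg _) zero_le_one
            · rw [abs_of_nonneg (Real.rpow_nonneg (hnonneg y (hKsub' hy)) _)]
              exact hu_le1 y hy
            · exact hv_lip y hy x hx
      _ = (Cφ * ((d:ℝ) + 1) * Bv + Cv) * |x - y| := by ring
  set Φ : ℝ → ℝ := fun s => ((d:ℝ) - 1) * (A s ^ (d - 2) * b s) with hΦ_def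
  have hΦnonneg : ∀ s ∈ Set.Ioo (0:ℝ) 1, 0 ≤ Φ s := by
    intro s hs
    rw [hΦ_def]
    simp only []
    rw [hAb s hs]
    have hδ'0 : 0 ≤ δ' s := (hd' s (Set.Ioo_subset_Icc_self hs)).1
    have hh0 : 0 ≤ h s := (hpos s hs).le
    have := Real.rpow_nonneg hh0 (-(1/(d:ℝ)))
    have := (Real.exp_pos (-F s)).le
    positivity
  have hFTC : ∀ t, r < t → t < 1 → IntegrableOn Φ (Set.Ioo r t) volume ∧
      (∫ s in r..t, Φ s) = G r - G t := by
    intro t hrt ht1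
    obtain ⟨C, hC⟩ := hGlip ((t + 1)/2) (by linarith) (by linarith)
    have hsub : Set.Ioo r t ⊆ Set.Icc 0 1 :=
      fun x hx => ⟨(lt_trans hr.1 hx.1).le, (lt_trans hx.2 ht1).le⟩
    have hae : ∀ᵐ x ∂(volume.restrict (Set.Ioo r t)), HasDerivAt G (-(Φ x)) x := by
      have h1 := ae_restrict_of_ae_restrict_of_subset hsub hderiv
      filter_upwards [h1, ae_restrict_mem measurableSet_Ioo] with x hx1 hx2
      exact hG' x ⟨lt_trans hr.1 hx2.1, lt_trans hx2.2 ht1⟩ hx1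
    obtain ⟨hint, heq⟩ := ftc_lipschitz_ae G (fun x => -(Φ x)) r t ((t + 1)/2)
      hrt.le (by linarith) C hC hae
    constructor
    · have h2 : IntegrableOn (fun x => -(-(Φ x))) (Set.Ioo r t) volume := hint.neg
      apply h2.congr_fun _ measurableSet_Ioo
      intro x _
      simp
    · rw [intervalIntegral.integral_neg] at heq
      linarith
  -- the approximating sequence
  set t : ℕ → ℝ := fun n => 1 - (1 - r)/(n + 2) with ht_def
  have hr1 : (0:ℝ) < 1 - r := by linarith [hr.2]
  have ht_lt1 : ∀ n, t n < 1 := by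
    intro n
    have : 0 < (1 - r)/((n:ℝ) + 2) := by positivity
    simp only [ht_def]; linarith
  have ht_gt : ∀ n, r < t n := by
    intro n
    have h2 : (1 - r)/((n:ℝ) + 2) < 1 - r := by
      apply div_lt_self hr1
      have : (0:ℝ) ≤ (n:ℝ) := Nat.cast_nonneg n
      linarith
    simp only [ht_def]; linarith
  have ht_half : ∀ n, 1/2 ≤ t n := by
    intro n
    have h2 : (1 - r)/((n:ℝ) + 2) ≤ (1 - r)/2 := by
      apply div_le_div_of_nonneg_left hr1.le (by norm_num)
      have : (0:ℝ) ≤ (n:ℝ) := Nat.cast_nonneg n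
      linarith
    have : (1 - r)/2 ≤ 1/2 := by linarith [hr.1]
    simp only [ht_def]; linarith
  have ht_mono : Monotone t := by
    intro n' m hnm
    have h2 : (1 - r)/((m:ℝ) + 2) ≤ (1 - r)/((n':ℝ) + 2) := by
      apply div_le_div_of_nonneg_left hr1.le (by positivity)
      have : (n' : ℝ) ≤ (m : ℝ) := Nat.cast_le.2 hnm
      linarith
    simp only [ht_def]; linarith
  have ht_tendsto : Tendsto t atTop (𝓝 1) := by
    have h2 : Tendsto (fun n : ℕ => (1 - r)/((n:ℝ) + 2)) atTop (𝓝 0) := by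
      apply Tendsto.div_atTop tendsto_const_nhds
      exact tendsto_atTop_add_const_right _ _ tendsto_natCast_atTop_atTop
    have := tendsto_const_nhds (x := (1:ℝ)) (f := atTop (α := ℕ)) |>.sub h2
    simpa using this
  have hGnonneg : ∀ s ∈ Set.Icc (0:ℝ) 1, 0 ≤ G s := by
    intro s hs
    rw [hG_def]
    exact mul_nonneg (Real.rpow_nonneg (hnonneg s hs) _) (Real.exp_pos _).le
  have htmem : ∀ n, t n ∈ Set.Icc (0:ℝ) 1 := fun n =>
    ⟨le_trans (by norm_num) (ht_half n), (ht_lt1 n).le⟩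
  have hGt0 : Tendsto (fun n => G (t n)) atTop (𝓝 0) := by
    have hht : Tendsto (fun n => h (t n)) atTop (𝓝 0) := by
      have h2 : Tendsto t atTop (𝓝[Set.Icc (0:ℝ) 1] 1) :=
        tendsto_nhdsWithin_of_tendsto_nhds_of_eventually_within _ ht_tendsto
          (Eventually.of_forall htmem)
      have h3 := (hhcont 1 (Set.right_mem_Icc.2 zero_le_one)).tendsto.comp h2
      rwa [hh1] at h3
    have hrp : Tendsto (fun n => h (t n) ^ (1 - 1/(d:ℝ))) atTop (𝓝 0) := by
      have hc : ContinuousAt (fun x : ℝ => x ^ (1 - 1/(d:ℝ))) 0 :=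
        Real.continuousAt_rpow_const 0 _ (Or.inr hα_pos.le)
      have := hc.tendsto.comp hht
      rwa [Real.zero_rpow hα_pos.ne'] at this
    apply squeeze_zero (fun n => hGnonneg (t n) (htmem n)) _ hrp
    intro n
    rw [hG_def]
    simp only []
    apply mul_le_of_le_one_right (Real.rpow_nonneg (hnonneg (t n) (htmem n)) _)
    rw [Real.exp_le_one_iff]
    simp only [neg_nonpos]
    exact hFnonneg (t n) (ht_half n) (ht_lt1 n).le
  -- integrability on (r, 1]
  have hIoc_sub : ∀ n, Set.Ioc r (t n) ⊆ Set.Ioo (0:ℝ) 1 := fun n x hx =>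
    ⟨lt_trans hr.1 hx.1, lt_of_le_of_lt hx.2 (ht_lt1 n)⟩
  have hint_n : ∀ n, IntegrableOn Φ (Set.Ioc r (t n)) volume := by
    intro n
    exact ((hFTC (t n) (ht_gt n) (ht_lt1 n)).1).congr_set_ae Ioo_ae_eq_Ioc.symm
  have hbound_n : ∀ n, (∫ x in Set.Ioc r (t n), ‖Φ x‖) ≤ G r := by
    intro n
    have he1 : ∫ x in Set.Ioc r (t n), ‖Φ x‖ = ∫ x in Set.Ioc r (t n), Φ x := by
      apply MeasureTheory.setIntegral_congr_fun measurableSet_Ioc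
      intro x hx
      have := hΦnonneg x (hIoc_sub n hx)
      simp [abs_of_nonneg this]
    have he2 : ∫ x in Set.Ioc r (t n), Φ x = ∫ s in r..(t n), Φ s := by
      rw [intervalIntegral.integral_of_le (ht_gt n).le]
    rw [he1, he2, (hFTC (t n) (ht_gt n) (ht_lt1 n)).2]
    linarith [hGnonneg (t n) (htmem n)]
  have hIoc1 : IntegrableOn Φ (Set.Ioc r 1) volume := by
    apply MeasureTheory.integrableOn_Ioc_of_intervalIntegral_norm_bounded
      (a := fun _ : ℕ => r) (b := t) (I := G r) hint_n tendsto_const_nhds ht_tendsto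
    exact Eventually.of_forall hbound_n
  have hIoo1 : IntegrableOn Φ (Set.Ioo r 1) volume :=
    hIoc1.mono_set Set.Ioo_subset_Ioc_self
  -- union
  have hUnion : (⋃ n, Set.Ioo r (t n)) = Set.Ioo r 1 := by
    ext x
    simp only [Set.mem_iUnion, Set.mem_Ioo]
    constructor
    · rintro ⟨n, hx1, hx2⟩
      exact ⟨hx1, lt_trans hx2 (ht_lt1 n)⟩
    · rintro ⟨hx1, hx2⟩
      obtain ⟨n, hn⟩ := (ht_tendsto.eventually (eventually_gt_nhds hx2)).exists
      exact ⟨n, hx1, hn⟩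
  have hTendInt : Tendsto (fun n => ∫ x in Set.Ioo r (t n), Φ x) atTop
      (𝓝 (∫ x in Set.Ioo r 1, Φ x)) := by
    have := MeasureTheory.tendsto_setIntegral_of_monotone
      (s := fun n => Set.Ioo r (t n)) (fun n => measurableSet_Ioo)
      (fun n' m hnm => Set.Ioo_subset_Ioo le_rfl (ht_mono hnm)) (by rw [hUnion]; exact hIoo1)
    rwa [hUnion] at this
  have hTendInt2 : Tendsto (fun n => ∫ x in Set.Ioo r (t n), Φ x) atTop (𝓝 (G r)) := by
    have heq : ∀ n, ∫ x in Set.Ioo r (t n), Φ x = G r - G (t n) := by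
      intro n
      rw [← (hFTC (t n) (ht_gt n) (ht_lt1 n)).2,
        intervalIntegral.integral_of_le (ht_gt n).le,
        MeasureTheory.integral_Ioc_eq_integral_Ioo]
    have := (tendsto_const_nhds (x := G r) (f := atTop (α := ℕ))).sub hGt0
    rw [sub_zero] at this
    exact this.congr (fun n => (heq n).symm)
  have hfinal : ∫ x in Set.Ioo r 1, Φ x = G r := tendsto_nhds_unique hTendInt hTendInt2
  calc ((d : ℝ) - 1) * ∫ s in r..(1:ℝ), A s ^ (d - 2) * b s
      = ∫ s in r..(1:ℝ), Φ s := by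
        rw [hΦ_def, intervalIntegral.integral_const_mul]
    _ = ∫ x in Set.Ioo r 1, Φ x := by
        rw [intervalIntegral.integral_of_le hr.2.le,
          MeasureTheory.integral_Ioc_eq_integral_Ioo]
    _ = G r := hfinal
    _ = h r ^ (1 - 1/(d:ℝ)) * Real.exp (-F r) := by rw [hG_def]
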